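/- Let j be an odd positive integer, let a be an even positive integer, and let σ ∈ S_{ja} be a permutation whose cycle type is (j^a). Then M(σ) = j^{a/2}·(a−1)·(a−3)⋯3·1, i.e. the number of fixed-point-free involutions of S_{ja} commuting with σ equals j^{a/2} times the double factorial (a−1)!!. -/

import Mathlib

open scoped Nat

noncomputable section

/-- `numMatchings σ` is the number of fixed-point-free involutions `m` (i.e. `m * m = 1` and
`m x ≠ x` for all `x`) that commute with `σ`; equivalently, the number of matchings of the `k`
points preserved by `σ`. -/
def numMatchings {k : ℕ} (σ : Equiv.Perm (Fin k)) : ℕ :=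
  Nat.card {m : Equiv.Perm (Fin k) // m * m = 1 ∧ (∀ x, m x ≠ x) ∧ m * σ = σ * m}

open Equiv

-- Part A: invariance of the matching count under relabelling.
theorem pc_mul {α β : Type*} (E : α ≃ β) (m n : Perm α) :
    E.permCongr (m * n) = E.permCongr m * E.permCongr n := by
  ext x; simp [Equiv.permCongr_apply, Equiv.Perm.mul_apply]

theorem pc_one {α β : Type*} (E : α ≃ β) : E.permCongr (1 : Perm α) = 1 := by
  ext x; simp

theorem count_congr {α β : Type*} (E : α ≃ β) (σ : Perm α) :
    Nat.card {m : Perm α // m * m = 1 ∧ (∀ x, m x ≠ x) ∧ m * σ = σ * m}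
      = Nat.card {m : Perm β // m * m = 1 ∧ (∀ x, m x ≠ x) ∧
          m * E.permCongr σ = E.permCongr σ * m} := by
  apply Nat.card_congr
  refine Equiv.subtypeEquiv E.permCongr fun m => ?_
  have hinj : Function.Injective E.permCongr := E.permCongr.injective
  constructor
  · rintro ⟨h1, h2, h3⟩
    refine ⟨by rw [← pc_mul, h1, pc_one], fun y => ?_, by rw [← pc_mul, ← pc_mul, h3]⟩
    simp only [Equiv.permCongr_apply]
    intro h
    exact h2 (E.symm y) (by conv_rhs => rw [← h]; rw [Equiv.symm_apply_apply])
  · rintro ⟨h1, h2, h3⟩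
    refine ⟨hinj (by rw [pc_mul, h1, pc_one]), fun x => ?_, hinj (by rw [pc_mul, pc_mul, h3])⟩
    intro h
    exact h2 (E x) (by simp [Equiv.permCongr_apply, h])

-- restriction/extension equiv for the inductive step
def fpfEquiv {α : Type} [Fintype α] [DecidableEq α] (x₀ y : α) (hy : y ≠ x₀) :
    {τ : Perm α // (τ * τ = 1 ∧ ∀ x, τ x ≠ x) ∧ τ x₀ = y} ≃
      {τ' : Perm {z : α // z ≠ x₀ ∧ z ≠ y} // τ' * τ' = 1 ∧ ∀ z, τ' z ≠ z} where
  toFun := fun ⟨τ, ⟨⟨hinv, hfpf⟩, hx⟩⟩ => by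
    have hττ : ∀ z, τ (τ z) = z := fun z => by
      have := congrArg (fun f : Perm α => f z) hinv
      simpa [Equiv.Perm.mul_apply] using this
    have hiff : ∀ z, (z ≠ x₀ ∧ z ≠ y) ↔ (τ z ≠ x₀ ∧ τ z ≠ y) := by
      intro z
      constructor
      · rintro ⟨h1, h2⟩
        refine ⟨fun h => h2 ?_, fun h => h1 ?_⟩
        · rw [← hττ z, h, hx]
        · rw [← hττ z, h, ← hx, hττ]
      · rintro ⟨h1, h2⟩
        constructor
        · intro h; subst h; exact h2 hx
        · intro h; subst h; exact h1 (by rw [← hx, hττ])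
    refine ⟨τ.subtypePerm (fun z => (hiff z).symm), ?_, ?_⟩
    · ext z
      simp [Equiv.Perm.mul_apply, Equiv.Perm.subtypePerm_apply, hττ]
    · rintro ⟨z, hz⟩ h
      exact hfpf z (congrArg Subtype.val h)
  invFun := fun ⟨τ', ⟨hinv', hfpf'⟩⟩ => by
    refine ⟨Equiv.Perm.ofSubtype τ' * Equiv.swap x₀ y, ⟨⟨?_, ?_⟩, ?_⟩⟩
    · have hd : (Equiv.Perm.ofSubtype τ').Disjoint (Equiv.swap x₀ y) := by
        intro z
        by_cases hz : z ≠ x₀ ∧ z ≠ y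
        · right; exact Equiv.swap_apply_of_ne_of_ne hz.1 hz.2
        · left
          apply Equiv.Perm.ofSubtype_apply_of_not_mem
          exact hz
      have hcomm := hd.commute
      calc (Equiv.Perm.ofSubtype τ' * Equiv.swap x₀ y) * (Equiv.Perm.ofSubtype τ' * Equiv.swap x₀ y)
          = Equiv.Perm.ofSubtype τ' * (Equiv.swap x₀ y * Equiv.Perm.ofSubtype τ') * Equiv.swap x₀ y := by
            group
        _ = Equiv.Perm.ofSubtype τ' * (Equiv.Perm.ofSubtype τ' * Equiv.swap x₀ y) * Equiv.swap x₀ y := by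
            rw [hcomm.eq]
        _ = (Equiv.Perm.ofSubtype τ' * Equiv.Perm.ofSubtype τ') * (Equiv.swap x₀ y * Equiv.swap x₀ y) := by
            group
        _ = 1 := by
            rw [← map_mul, hinv', map_one, Equiv.swap_mul_self, mul_one]
    · intro z
      by_cases hz : z ≠ x₀ ∧ z ≠ y
      · rw [Equiv.Perm.mul_apply, Equiv.swap_apply_of_ne_of_ne hz.1 hz.2,
          Equiv.Perm.ofSubtype_apply_of_mem τ' hz]
        intro h
        exact hfpf' ⟨z, hz⟩ (Subtype.ext h)
      · push_neg at hz
        by_cases hzx : z = x₀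
        · subst hzx
          rw [Equiv.Perm.mul_apply, Equiv.swap_apply_left,
            Equiv.Perm.ofSubtype_apply_of_not_mem τ' (by simp)]
          exact fun h => hy (h ▸ rfl)
        · have hzy : z = y := hz hzx
          subst hzy
          rw [Equiv.Perm.mul_apply, Equiv.swap_apply_right,
            Equiv.Perm.ofSubtype_apply_of_not_mem τ' (by simp)]
          exact fun h => hzx h.symm
    · rw [Equiv.Perm.mul_apply, Equiv.swap_apply_left,
        Equiv.Perm.ofSubtype_apply_of_not_mem τ' (by simp)]
  left_inv := by
    rintro ⟨τ, ⟨⟨hinv, hfpf⟩, hx⟩⟩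
    have hττ : ∀ z, τ (τ z) = z := fun z => by
      have := congrArg (fun f : Perm α => f z) hinv
      simpa [Equiv.Perm.mul_apply] using this
    apply Subtype.ext
    ext z
    simp only [Equiv.Perm.mul_apply]
    by_cases hz : z ≠ x₀ ∧ z ≠ y
    · rw [Equiv.swap_apply_of_ne_of_ne hz.1 hz.2,
        Equiv.Perm.ofSubtype_apply_of_mem (p := fun w => w ≠ x₀ ∧ w ≠ y) _ hz,
        Equiv.Perm.subtypePerm_apply]
    · push_neg at hz
      by_cases hzx : z = x₀
      · rw [hzx, Equiv.swap_apply_left,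
          Equiv.Perm.ofSubtype_apply_of_not_mem (p := fun w => w ≠ x₀ ∧ w ≠ y) _ (by simp), hx]
      · have hzy : z = y := hz hzx
        rw [hzy, Equiv.swap_apply_right,
          Equiv.Perm.ofSubtype_apply_of_not_mem (p := fun w => w ≠ x₀ ∧ w ≠ y) _ (by simp),
          ← hx, hττ]
  right_inv := by
    rintro ⟨τ', ⟨hinv', hfpf'⟩⟩
    apply Subtype.ext
    ext ⟨z, hz⟩
    simp only [Equiv.Perm.subtypePerm_apply, Equiv.Perm.mul_apply]
    rw [Equiv.swap_apply_of_ne_of_ne hz.1 hz.2, Equiv.Perm.ofSubtype_apply_of_mem τ' hz]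

theorem card_fpf_invol : ∀ (n : ℕ), Even n → ∀ (α : Type) [Fintype α] [DecidableEq α],
    Fintype.card α = n →
    Nat.card {τ : Perm α // τ * τ = 1 ∧ ∀ x, τ x ≠ x} = (n - 1)‼ := by
  intro n
  induction n using Nat.strong_induction_on with
  | _ n IH =>
    intro hn α _ _ hcard
    rcases Nat.eq_zero_or_pos n with h0 | hpos
    · subst h0
      have hem : IsEmpty α := Fintype.card_eq_zero_iff.mp hcard
      have : Unique {τ : Perm α // τ * τ = 1 ∧ ∀ x, τ x ≠ x} :=
        { default := ⟨1, by simp, fun x => (hem.false x).elim⟩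
          uniq := by
            rintro ⟨τ, _⟩
            apply Subtype.ext
            ext x
            exact (hem.false x).elim }
      simp [Nat.card_unique]
    · have h2 : 2 ≤ n := by
        rcases hn with ⟨k, hk⟩; omega
      have : Nonempty α := Fintype.card_pos_iff.mp (by omega)
      obtain ⟨x₀⟩ := this
      classical
      rw [Nat.card_eq_fintype_card, Fintype.card_subtype]
      have hsplit : (Finset.univ.filter fun τ : Perm α => τ * τ = 1 ∧ ∀ x, τ x ≠ x)
          = (Finset.univ.erase x₀).biUnion
              (fun y => Finset.univ.filter
                fun τ : Perm α => (τ * τ = 1 ∧ ∀ x, τ x ≠ x) ∧ τ x₀ = y) := by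
        ext τ
        simp only [Finset.mem_filter, Finset.mem_biUnion, Finset.mem_erase, Finset.mem_univ,
          true_and, and_true]
        constructor
        · rintro ⟨h1, h2'⟩
          exact ⟨τ x₀, h2' x₀, ⟨h1, h2'⟩, rfl⟩
        · rintro ⟨y, hy, h, rfl⟩
          exact h
      rw [hsplit, Finset.card_biUnion]
      · have hfib : ∀ y ∈ Finset.univ.erase x₀,
            (Finset.univ.filter
              fun τ : Perm α => (τ * τ = 1 ∧ ∀ x, τ x ≠ x) ∧ τ x₀ = y).card = (n - 3)‼ := by
          intro y hy
          have hyx : y ≠ x₀ := (Finset.mem_erase.mp hy).1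
          rw [← Fintype.card_subtype, ← Nat.card_eq_fintype_card,
            Nat.card_congr (fpfEquiv x₀ y hyx)]
          have hc2 : Fintype.card {z : α // z ≠ x₀ ∧ z ≠ y} = n - 2 := by
            rw [Fintype.card_subtype]
            have he : (Finset.univ.filter fun z : α => z ≠ x₀ ∧ z ≠ y)
                = (Finset.univ.erase x₀).erase y := by
              ext z
              simp only [Finset.mem_filter, Finset.mem_erase, Finset.mem_univ, true_and, and_true]
              tauto
            rw [he, Finset.card_erase_of_mem (Finset.mem_erase.mpr ⟨hyx, Finset.mem_univ y⟩),
              Finset.card_erase_of_mem (Finset.mem_univ _), Finset.card_univ, hcard]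
            omega
          have hev : Even (n - 2) := by
            rcases hn with ⟨k, hk⟩
            exact ⟨k - 1, by omega⟩
          rw [IH (n - 2) (by omega) hev {z : α // z ≠ x₀ ∧ z ≠ y} hc2]
          congr 1
        rw [Finset.sum_congr rfl hfib, Finset.sum_const,
          Finset.card_erase_of_mem (Finset.mem_univ _), Finset.card_univ, hcard, smul_eq_mul]
        -- (n-1) * (n-3)‼ = (n-1)‼
        rcases Nat.lt_or_ge n 4 with h4 | h4
        · have hn2 : n = 2 := by rcases hn with ⟨k, hk⟩; omega
          subst hn2; decide
        · obtain ⟨m, rfl⟩ : ∃ m, n = m + 4 := ⟨n - 4, by omega⟩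
          have e1 : m + 4 - 1 = (m + 1) + 2 := by omega
          have e2 : m + 4 - 3 = m + 1 := by omega
          rw [e1, e2, Nat.doubleFactorial_add_two]
      · intro y₁ _ y₂ _ hne
        apply Finset.disjoint_left.mpr
        intro τ h1 h2
        simp only [Finset.mem_filter] at h1 h2
        exact hne (h1.2.2 ▸ h2.2.2 ▸ rfl)

/-- The model permutation with cycle type `(j^a)`. -/
def sig0 (j a : ℕ) : Perm (ZMod j × Fin a) :=
  (Equiv.addRight (1 : ZMod j)).prodCongr (Equiv.refl (Fin a))

theorem sig0_apply (j a : ℕ) (x : ZMod j) (i : Fin a) : sig0 j a (x, i) = (x + 1, i) := rfl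

theorem sig0_pow (j a : ℕ) (n : ℕ) (x : ZMod j) (i : Fin a) :
    ((sig0 j a) ^ n) (x, i) = (x + n, i) := by
  induction n with
  | zero => simp
  | succ n IH =>
    rw [pow_succ', Equiv.Perm.mul_apply, sig0_apply, IH]
    exact Prod.ext (by push_cast; ring) rfl

theorem model_struct {j a : ℕ} [NeZero j] (m : Perm (ZMod j × Fin a))
    (hc : m * sig0 j a = sig0 j a * m) (x : ZMod j) (i : Fin a) :
    m (x, i) = ((m (0, i)).1 + x, (m (0, i)).2) := by
  have hcomm : Commute m (sig0 j a) := hc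
  have hp : m * (sig0 j a) ^ x.val = (sig0 j a) ^ x.val * m := (hcomm.pow_right x.val).eq
  have h0 : ((sig0 j a) ^ x.val) (0, i) = (x, i) := by
    rw [sig0_pow, zero_add, ZMod.natCast_rightInverse x]
  calc m (x, i) = (m * (sig0 j a) ^ x.val) (0, i) := by rw [Equiv.Perm.mul_apply, h0]
    _ = ((sig0 j a) ^ x.val * m) (0, i) := by rw [hp]
    _ = ((m (0, i)).1 + x, (m (0, i)).2) := by
        rw [Equiv.Perm.mul_apply, show m (0, i) = ((m (0,i)).1, (m (0,i)).2) from rfl,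
          sig0_pow, ZMod.natCast_rightInverse x]

/-- the subtype of pairs encoding a matching commuting with `sig0`. -/
def modelEquiv (j a : ℕ) [NeZero j] (hj : Odd j) :
    {m : Perm (ZMod j × Fin a) // m * m = 1 ∧ (∀ p, m p ≠ p) ∧ m * sig0 j a = sig0 j a * m} ≃
    {p : Perm (Fin a) × (Fin a → ZMod j) //
      (p.1 * p.1 = 1 ∧ ∀ i, p.1 i ≠ i) ∧ ∀ i, p.2 (p.1 i) = - p.2 i} where
  toFun := fun ⟨m, hm1, hm2, hm3⟩ => by
    have hst := model_struct m hm3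
    have hkey : ∀ i : Fin a, (m ((0 : ZMod j), (m (0, i)).2)).2 = i ∧
        (m ((0 : ZMod j), (m (0, i)).2)).1 = - (m (0, i)).1 := by
      intro i
      have h1 : m (m (0, i)) = ((0 : ZMod j), i) := by
        have := congrArg (fun f : Perm (ZMod j × Fin a) => f ((0 : ZMod j), i)) hm1
        simpa [Equiv.Perm.mul_apply] using this
      have h2 : m (m (0, i)) = ((m ((0:ZMod j), (m (0,i)).2)).1 + (m (0,i)).1,
          (m ((0:ZMod j), (m (0,i)).2)).2) := by
        conv_lhs => rw [show m (0, i) = ((m (0,i)).1, (m (0,i)).2) from rfl]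
        rw [hst]
      rw [h1] at h2
      have hfst := congrArg Prod.fst h2
      have hsnd := congrArg Prod.snd h2
      simp only at hfst hsnd
      exact ⟨hsnd.symm, by linear_combination (norm := ring_nf) -hfst⟩
    have hinv : Function.Involutive (fun i : Fin a => (m ((0 : ZMod j), i)).2) := by
      intro i
      exact (hkey i).1
    have h2u : IsUnit (2 : ZMod j) := by
      have hco : Nat.Coprime 2 j := (Nat.prime_two.coprime_iff_not_dvd).mpr
        (fun h => (Nat.not_even_iff_odd.mpr hj) ((even_iff_two_dvd).mpr h))
      have := (ZMod.isUnit_iff_coprime 2 j).mpr hco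
      simpa using this
    refine ⟨(hinv.toPerm _, fun i => (m ((0 : ZMod j), i)).1), ⟨⟨?_, ?_⟩, ?_⟩⟩
    · apply Equiv.ext; intro i
      simp only [Equiv.Perm.mul_apply, Equiv.Perm.one_apply, Function.Involutive.coe_toPerm]
      exact hinv i
    · intro i h
      simp only [Function.Involutive.coe_toPerm] at h
      have hc2 : (m ((0:ZMod j), i)).1 = - (m ((0:ZMod j), i)).1 := by
        have := (hkey i).2
        rwa [h] at this
      have hc0 : (m ((0:ZMod j), i)).1 = 0 := by
        have h20 : (2 : ZMod j) * (m ((0:ZMod j), i)).1 = 0 := by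
          rw [two_mul]
          linear_combination hc2
        exact (h2u.mul_right_eq_zero).mp h20
      apply hm2 ((0 : ZMod j), i)
      rw [hst]
      rw [hc0, h, zero_add]
    · intro i
      simp only [Function.Involutive.coe_toPerm]
      exact (hkey i).2
  invFun := fun ⟨⟨τ, c⟩, ⟨⟨h1, h2⟩, h3⟩⟩ => by
    have h1' : τ * τ = 1 := h1
    have h2' : ∀ i, τ i ≠ i := h2
    have h3' : ∀ i, c (τ i) = - c i := h3
    have hττ : ∀ i, τ (τ i) = i := by
      intro i
      have := congrArg (fun f : Perm (Fin a) => f i) h1'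
      simpa [Equiv.Perm.mul_apply] using this
    have hinv : Function.Involutive (fun p : ZMod j × Fin a => (p.1 + c p.2, τ p.2)) := by
      rintro ⟨x, i⟩
      show ((x + c i) + c (τ i), τ (τ i)) = (x, i)
      rw [hττ, h3', add_assoc, add_neg_cancel, add_zero]
    refine ⟨hinv.toPerm _, ?_, ?_, ?_⟩
    · apply Equiv.ext; intro p
      simp only [Equiv.Perm.mul_apply, Equiv.Perm.one_apply, Function.Involutive.coe_toPerm]
      exact hinv p
    · rintro ⟨x, i⟩ h
      simp only [Function.Involutive.coe_toPerm] at h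
      exact h2' i (congrArg Prod.snd h)
    · apply Equiv.ext; rintro ⟨x, i⟩
      simp only [Equiv.Perm.mul_apply, Function.Involutive.coe_toPerm, sig0_apply]
      exact Prod.ext (by ring) rfl
  left_inv := by
    rintro ⟨m, hm1, hm2, hm3⟩
    have hst := model_struct m hm3
    apply Subtype.ext
    apply Equiv.ext
    rintro ⟨x, i⟩
    simp only [Function.Involutive.coe_toPerm]
    rw [hst x i]
    exact Prod.ext (add_comm _ _) rfl
  right_inv := by
    rintro ⟨⟨τ, c⟩, ⟨⟨h1, h2⟩, h3⟩⟩
    apply Subtype.ext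
    apply Prod.ext
    · apply Equiv.ext
      intro i
      rfl
    · funext i
      show (0 : ZMod j) + c i = c i
      exact zero_add _

theorem fiber_equiv (j a : ℕ) (τ : Perm (Fin a)) (hττ : ∀ i, τ (τ i) = i)
    (hne : ∀ i, τ i ≠ i) :
    Nonempty ({c : Fin a → ZMod j // ∀ i, c (τ i) = - c i} ≃ ({r : Fin a // r < τ r} → ZMod j)) := by
  have lt1 : ∀ i : Fin a, ¬ i < τ i → τ i < τ (τ i) := by
    intro i h
    rw [hττ]
    exact lt_of_le_of_ne (not_lt.mp h) (hne i)
  refine ⟨{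
    toFun := fun c r => c.1 r.1
    invFun := fun f => ⟨fun i => if h : i < τ i then f ⟨i, h⟩ else - f ⟨τ i, lt1 i h⟩, ?_⟩
    left_inv := ?_
    right_inv := ?_ }⟩
  · intro i
    by_cases h : i < τ i
    · have hnot : ¬ τ i < τ (τ i) := by rw [hττ]; exact lt_asymm h
      simp only [dif_neg hnot, dif_pos h]
      have he : (⟨τ (τ i), lt1 (τ i) hnot⟩ : {r : Fin a // r < τ r}) = ⟨i, h⟩ :=
        Subtype.ext (hττ i)
      rw [he]
    · have h' : τ i < τ (τ i) := lt1 i h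
      simp only [dif_pos h', dif_neg h, neg_neg]
  · intro c
    apply Subtype.ext
    funext i
    by_cases h : i < τ i
    · simp only [dif_pos h]
    · simp only [dif_neg h]
      rw [c.2 i, neg_neg]
  · intro f
    funext r
    obtain ⟨i, h⟩ := r
    simp only [dif_pos h]

theorem half_card (a : ℕ) (τ : Perm (Fin a)) (hττ : ∀ i, τ (τ i) = i) (hne : ∀ i, τ i ≠ i) :
    Fintype.card {r : Fin a // r < τ r} = a / 2 := by
  classical
  have hR : Fintype.card {r : Fin a // r < τ r}
      = (Finset.univ.filter fun i : Fin a => i < τ i).card := Fintype.card_subtype _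
  set R := Finset.univ.filter fun i : Fin a => i < τ i with hRdef
  set L := Finset.univ.filter fun i : Fin a => τ i < i with hLdef
  have hL : L = R.image τ := by
    ext z
    simp only [hLdef, hRdef, Finset.mem_filter, Finset.mem_univ, true_and, Finset.mem_image]
    constructor
    · intro h
      exact ⟨τ z, by simp [hRdef, Finset.mem_filter, hττ, h], hττ z⟩
    · rintro ⟨y, hy, rfl⟩
      rw [hττ]
      exact hy
  have hdisj : Disjoint R L := by
    apply Finset.disjoint_left.mpr
    intro z hz1 hz2
    simp only [hRdef, hLdef, Finset.mem_filter, Finset.mem_univ, true_and] at hz1 hz2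
    exact lt_asymm hz1 hz2
  have huniv : R ∪ L = Finset.univ := by
    apply Finset.eq_univ_iff_forall.mpr
    intro z
    rcases (hne z).lt_or_gt with h | h
    · exact Finset.mem_union_right _ (by simp [hLdef, h])
    · exact Finset.mem_union_left _ (by simp [hRdef, h])
  have hcardL : L.card = R.card := by
    rw [hL, Finset.card_image_of_injective _ τ.injective]
  have h2 : 2 * R.card = a := by
    have := congrArg Finset.card huniv
    rw [Finset.card_union_of_disjoint hdisj, hcardL, Finset.card_univ, Fintype.card_fin] at this
    omega
  rw [hR]
  omega

theorem model_count (j a : ℕ) [NeZero j] (hj : Odd j) :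
    Nat.card {m : Perm (ZMod j × Fin a) //
        m * m = 1 ∧ (∀ p, m p ≠ p) ∧ m * sig0 j a = sig0 j a * m}
      = (Nat.card {τ : Perm (Fin a) // τ * τ = 1 ∧ ∀ i, τ i ≠ i}) * j ^ (a / 2) := by
  classical
  rw [Nat.card_congr (modelEquiv j a hj)]
  rw [Nat.card_congr (Equiv.subtypeProdEquivSigmaSubtype
    (fun (τ : Perm (Fin a)) (c : Fin a → ZMod j) =>
      (τ * τ = 1 ∧ ∀ i, τ i ≠ i) ∧ ∀ i, c (τ i) = - c i))]
  rw [Nat.card_eq_fintype_card, Fintype.card_sigma]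
  have hterm : ∀ τ : Perm (Fin a),
      Fintype.card {c : Fin a → ZMod j // (τ * τ = 1 ∧ ∀ i, τ i ≠ i) ∧ ∀ i, c (τ i) = - c i}
        = if (τ * τ = 1 ∧ ∀ i, τ i ≠ i) then j ^ (a / 2) else 0 := by
    intro τ
    by_cases hP : τ * τ = 1 ∧ ∀ i, τ i ≠ i
    · rw [if_pos hP]
      have hττ : ∀ i, τ (τ i) = i := by
        intro i
        have := congrArg (fun f : Perm (Fin a) => f i) hP.1
        simpa [Equiv.Perm.mul_apply] using this
      obtain ⟨E⟩ := fiber_equiv j a τ hττ hP.2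
      rw [Fintype.card_congr ((Equiv.subtypeEquivRight (fun c => and_iff_right hP)).trans E),
        Fintype.card_fun, ZMod.card, half_card a τ hττ hP.2]
    · rw [if_neg hP]
      exact Fintype.card_eq_zero_iff.mpr ⟨fun c => hP c.2.1⟩
  rw [Finset.sum_congr rfl (fun τ _ => hterm τ), Finset.sum_ite, Finset.sum_const,
    Finset.sum_const_zero, add_zero, smul_eq_mul, Nat.card_eq_fintype_card,
    Fintype.card_subtype]

def cycEmb (j a : ℕ) (i : Fin a) : ZMod j ≃ {p : ZMod j × Fin a // p.2 = i} where
  toFun := fun x => ⟨(x, i), rfl⟩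
  invFun := fun p => p.1.1
  left_inv := fun x => rfl
  right_inv := fun ⟨⟨x, k⟩, hk⟩ => Subtype.ext (Prod.ext rfl hk.symm)

def cyc (j a : ℕ) (i : Fin a) : Perm (ZMod j × Fin a) :=
  (Equiv.addRight (1 : ZMod j)).extendDomain (cycEmb j a i)

theorem cyc_apply_mem (j a : ℕ) (i : Fin a) (x : ZMod j) : cyc j a i (x, i) = (x + 1, i) := by
  rw [cyc, Equiv.Perm.extendDomain_apply_subtype (Equiv.addRight (1 : ZMod j)) (cycEmb j a i)
    (b := ((x, i) : ZMod j × Fin a)) rfl]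
  rfl

theorem cyc_apply_not (j a : ℕ) {i k : Fin a} (hk : k ≠ i) (x : ZMod j) :
    cyc j a i (x, k) = (x, k) :=
  Equiv.Perm.extendDomain_apply_not_subtype _ _ hk

theorem addRight_one_pow (j n : ℕ) : ∀ x : ZMod j,
    ((Equiv.addRight (1 : ZMod j)) ^ n) x = x + n := by
  induction n with
  | zero => simp
  | succ n IH =>
    intro x
    rw [pow_succ, Equiv.Perm.mul_apply]
    have hx : (Equiv.addRight (1 : ZMod j)) x = x + 1 := rfl
    rw [hx, IH (x + 1)]
    push_cast
    ring

theorem isCycle_addRight (j : ℕ) (hj2 : 2 ≤ j) :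
    Equiv.Perm.IsCycle (Equiv.addRight (1 : ZMod j)) := by
  haveI : NeZero j := ⟨by omega⟩
  have h10 : (1 : ZMod j) ≠ 0 := by
    intro h
    have hd := (ZMod.natCast_eq_zero_iff 1 j).mp (by simpa using h)
    have := Nat.le_of_dvd one_pos hd
    omega
  refine ⟨0, ?_, ?_⟩
  · show (0 : ZMod j) + 1 ≠ 0
    simpa using h10
  · intro y _
    refine ⟨(y.val : ℤ), ?_⟩
    rw [zpow_natCast, addRight_one_pow j _ 0]
    show (0 : ZMod j) + (y.val : ZMod j) = y
    rw [zero_add, ZMod.natCast_rightInverse y]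

theorem support_addRight (j : ℕ) [NeZero j] (hj2 : 2 ≤ j) :
    (Equiv.addRight (1 : ZMod j)).support = Finset.univ := by
  have h10 : (1 : ZMod j) ≠ 0 := by
    intro h
    have hd := (ZMod.natCast_eq_zero_iff 1 j).mp (by simpa using h)
    have := Nat.le_of_dvd one_pos hd
    omega
  apply Finset.eq_univ_iff_forall.mpr
  intro x
  apply Equiv.Perm.mem_support.mpr
  show x + 1 ≠ x
  intro h
  exact h10 (by rwa [add_eq_left] at h)

theorem sig0_cycleType (j a : ℕ) [NeZero j] (hj2 : 2 ≤ j) :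
    (sig0 j a).cycleType = Multiset.replicate a j := by
  classical
  have hprod : ∀ (L : List (Fin a)), L.Nodup → ∀ (x : ZMod j) (i : Fin a),
      ((L.map (cyc j a)).prod) (x, i) = if i ∈ L then (x + 1, i) else (x, i) := by
    intro L
    induction L with
    | nil => intro _ x i; simp
    | cons i₀ L IH =>
      intro hnd x i
      rw [List.map_cons, List.prod_cons, Equiv.Perm.mul_apply,
        IH (List.nodup_cons.mp hnd).2]
      by_cases hi : i = i₀
      · subst hi
        have hiL : i ∉ L := (List.nodup_cons.mp hnd).1
        rw [if_neg hiL, cyc_apply_mem, if_pos (List.mem_cons_self)]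
      · by_cases hiL : i ∈ L
        · rw [if_pos hiL, cyc_apply_not j a hi, if_pos (List.mem_cons_of_mem _ hiL)]
        · rw [if_neg hiL, cyc_apply_not j a hi, if_neg (by simp [hi, hiL])]
  have hprodeq : ((List.finRange a).map (cyc j a)).prod = sig0 j a := by
    apply Equiv.ext; rintro ⟨x, i⟩
    rw [hprod _ (List.nodup_finRange a) x i, if_pos (List.mem_finRange i), sig0_apply]
  have h1 : ∀ g ∈ (List.finRange a).map (cyc j a), g.IsCycle := by
    intro g hg
    rw [List.mem_map] at hg
    obtain ⟨i, _, rfl⟩ := hg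
    exact (isCycle_addRight j hj2).extendDomain (cycEmb j a i)
  have h2 : ((List.finRange a).map (cyc j a)).Pairwise Equiv.Perm.Disjoint := by
    rw [List.pairwise_map]
    refine List.Pairwise.imp ?_ (List.nodup_finRange a)
    intro i i' hne
    rintro ⟨x, k⟩
    by_cases hk : k = i
    · right
      exact cyc_apply_not j a (by rw [hk]; exact hne) x
    · left
      exact cyc_apply_not j a hk x
  rw [Equiv.Perm.cycleType_eq _ hprodeq h1 h2]
  apply Multiset.eq_replicate.mpr
  constructor
  · simp
  · intro b hb
    rw [Multiset.mem_coe, List.map_map, List.mem_map] at hb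
    obtain ⟨i, _, rfl⟩ := hb
    show (cyc j a i).support.card = j
    rw [cyc, Equiv.Perm.card_support_extend_domain, support_addRight j hj2,
      Finset.card_univ, ZMod.card]

theorem cycleType_permCongr {α β : Type} [Fintype α] [DecidableEq α] [Fintype β] [DecidableEq β]
    (E : α ≃ β) (σ : Perm α) : (E.permCongr σ).cycleType = σ.cycleType := by
  classical
  have h : E.permCongr σ = σ.extendDomain
      (E.trans (Equiv.subtypeUnivEquiv (fun b : β => trivial)).symm) := by
    apply Equiv.ext; intro b
    rw [Equiv.Perm.extendDomain_apply_subtype _ _ trivial]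
    simp [Equiv.subtypeUnivEquiv, Equiv.permCongr_apply, Equiv.trans_apply,
      Equiv.symm_trans_apply]
  rw [h, Equiv.Perm.cycleType_extendDomain]

/-- If `j` is odd, `a` is even and `σ` has cycle type `(j^a)`, then the number of
fixed-point-free involutions commuting with `σ` is `j^(a/2) * (a-1)‼`. -/
theorem statement5 (j a : ℕ) (hj0 : 0 < j) (ha0 : 0 < a) (hj : Odd j) (ha : Even a)
    (σ : Equiv.Perm (Fin (j * a))) (hσ : σ.partition.parts = Multiset.replicate a j) :
    numMatchings σ = j ^ (a / 2) * (a - 1)‼ := by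
  classical
  haveI : NeZero j := ⟨hj0.ne'⟩
  have hcard : Fintype.card (ZMod j × Fin a) = j * a := by
    simp [ZMod.card]
  let E : ZMod j × Fin a ≃ Fin (j * a) := Fintype.equivFinOfCardEq hcard
  have hD : ∃ D : ZMod j × Fin a ≃ Fin (j * a), σ = D.permCongr (sig0 j a) := by
    rcases eq_or_ne j 1 with rfl | hj1
    · have hσ0 : sig0 1 a = 1 := by
        apply Equiv.ext; rintro ⟨x, i⟩
        exact Prod.ext (Subsingleton.elim _ _) rfl
      have hσct : σ.cycleType = 0 := by
        rw [← Equiv.Perm.filter_parts_partition_eq_cycleType, hσ]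
        apply Multiset.filter_eq_nil.mpr
        intro b hb
        rw [Multiset.eq_of_mem_replicate hb]
        decide
      have hσ1 : σ = 1 := Equiv.Perm.cycleType_eq_zero.mp hσct
      exact ⟨E, by rw [hσ0, pc_one, hσ1]⟩
    · have hj2 : 2 ≤ j := by
        rcases hj with ⟨k, hk⟩; omega
      have hall : ∀ b ∈ Multiset.replicate a j, 2 ≤ b := fun b hb => by
        rw [Multiset.eq_of_mem_replicate hb]; exact hj2
      have hct : σ.cycleType = Multiset.replicate a j := by
        rw [← Equiv.Perm.filter_parts_partition_eq_cycleType, hσ,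
          Multiset.filter_eq_self.mpr hall]
      have hct1 : (E.permCongr (sig0 j a)).cycleType = Multiset.replicate a j := by
        rw [cycleType_permCongr, sig0_cycleType j a hj2]
      have hconj : IsConj (E.permCongr (sig0 j a)) σ :=
        Equiv.Perm.isConj_iff_cycleType_eq.mpr (by rw [hct1, hct])
      obtain ⟨g, hg⟩ := isConj_iff.mp hconj
      refine ⟨E.trans g, ?_⟩
      have hcomp : (E.trans g).permCongr (sig0 j a)
          = g.permCongr (E.permCongr (sig0 j a)) := by
        apply Equiv.ext; intro x
        simp only [Equiv.permCongr_apply, Equiv.trans_apply, Equiv.symm_trans_apply]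
      rw [hcomp, Equiv.permCongr_eq_mul, hg]
  obtain ⟨D, hDeq⟩ := hD
  unfold numMatchings
  rw [hDeq, ← count_congr D (sig0 j a), model_count j a hj,
    card_fpf_invol a ha (Fin a) (Fintype.card_fin a), mul_comm]
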